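/- The maps Φ_K(G) = G ∘ π_K and Ψ_K(F) = F ∘ σ_K are mutually inverse linear isometries (for the sup norm) between C_0([0, λ(K)]) and the space X_K of continuous functions F on K with F(min K) = 0 that are constant on each fiber of π_K. In particular, X_K = {G ∘ π_K : G ∈ C_0([0, λ(K)])}. -/

import Mathlib

open MeasureTheory Set

/-- Measure projection `π_K`. -/
noncomputable def piProj (K : Set ℝ) (x : ℝ) : ℝ :=
  (volume (Set.Icc (sInf K) x ∩ K)).toReal

/-- Left-endpoint selector `σ_K`. -/
noncomputable def sigmaSel (K : Set ℝ) (t : ℝ) : ℝ :=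
  sInf {x ∈ K | piProj K x = t}

/-- Membership in the space `X_K`: continuous on `K`, vanishing at `min K`,
constant on each fiber of `π_K`. -/
def MemXK (K : Set ℝ) (F : ℝ → ℝ) : Prop :=
  ContinuousOn F K ∧ F (sInf K) = 0 ∧
    ∀ x ∈ K, ∀ y ∈ K, piProj K x = piProj K y → F x = F y

/-- Membership in `C_0([0, λ(K)])`: continuous on the interval and vanishing at `0`. -/
def MemC0 (v : ℝ) (G : ℝ → ℝ) : Prop :=
  ContinuousOn G (Set.Icc 0 v) ∧ G 0 = 0

namespace Stmt10Aux

lemma icc_fin (K : Set ℝ) (a b : ℝ) : volume (Set.Icc a b ∩ K) ≠ ⊤ :=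
  ((measure_mono inter_subset_left).trans_lt
    (by rw [Real.volume_Icc]; exact ENNReal.ofReal_lt_top)).ne

lemma pi_mono (K : Set ℝ) : Monotone (piProj K) := by
  intro x y hxy
  apply ENNReal.toReal_mono (icc_fin K _ _)
  exact measure_mono (inter_subset_inter_left _ (Icc_subset_Icc_right hxy))

lemma pi_le_add (K : Set ℝ) {x y : ℝ} (hxy : x ≤ y) :
    piProj K y ≤ piProj K x + (y - x) := by
  have hsub : Icc (sInf K) y ∩ K ⊆ (Icc (sInf K) x ∩ K) ∪ Ioc x y := by
    rintro z ⟨⟨hz1, hz2⟩, hzK⟩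
    rcases le_or_gt z x with h | h
    · exact Or.inl ⟨⟨hz1, h⟩, hzK⟩
    · exact Or.inr ⟨h, hz2⟩
  have hx : volume (Icc (sInf K) x ∩ K) ≠ ⊤ := icc_fin K _ _
  have h2 : volume (Ioc x y) ≠ ⊤ := by
    rw [Real.volume_Ioc]; exact ENNReal.ofReal_lt_top.ne
  calc piProj K y ≤ ((volume (Icc (sInf K) x ∩ K)) + volume (Ioc x y)).toReal :=
        ENNReal.toReal_mono (by simp [hx, h2]) ((measure_mono hsub).trans (measure_union_le _ _))
    _ = piProj K x + (y - x) := by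
        rw [ENNReal.toReal_add hx h2, piProj, Real.volume_Ioc, ENNReal.toReal_ofReal (by linarith)]

lemma pi_cont (K : Set ℝ) : Continuous (piProj K) := by
  have : LipschitzWith 1 (piProj K) := by
    apply LipschitzWith.of_dist_le_mul
    intro x y
    rw [NNReal.coe_one, one_mul]
    rcases le_total x y with h | h
    · rw [Real.dist_eq, abs_sub_comm, abs_of_nonneg (by linarith [pi_mono K h]),
        Real.dist_eq, abs_sub_comm, abs_of_nonneg (by linarith)]
      linarith [pi_le_add K h]
    · rw [Real.dist_eq, abs_of_nonneg (by linarith [pi_mono K h]),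
        Real.dist_eq, abs_of_nonneg (by linarith)]
      linarith [pi_le_add K h]
  exact this.continuous

lemma pi_nonneg (K : Set ℝ) (x : ℝ) : 0 ≤ piProj K x := ENNReal.toReal_nonneg

lemma Kne {K : Set ℝ} (hpos : 0 < volume K) : K.Nonempty := by
  rw [nonempty_iff_ne_empty]
  rintro rfl
  simp at hpos

lemma pi_mem_Icc {K : Set ℝ} (hK : IsCompact K) (x : ℝ) :
    piProj K x ∈ Icc (0 : ℝ) (volume K).toReal :=
  ⟨ENNReal.toReal_nonneg,
    ENNReal.toReal_mono hK.measure_lt_top.ne (measure_mono inter_subset_right)⟩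

lemma pi_sInf (K : Set ℝ) : piProj K (sInf K) = 0 := by
  have h0 : volume (Icc (sInf K) (sInf K) ∩ K) = 0 := by
    apply measure_mono_null (t := {sInf K})
    · rw [Icc_self]; exact inter_subset_left
    · exact Real.volume_singleton
  rw [piProj, h0, ENNReal.toReal_zero]

lemma sInf_mem {K : Set ℝ} (hK : IsCompact K) (hpos : 0 < volume K) : sInf K ∈ K :=
  hK.sInf_mem (Kne hpos)

lemma pi_surj {K : Set ℝ} (hK : IsCompact K) (hpos : 0 < volume K) {t : ℝ}
    (ht : t ∈ Icc (0 : ℝ) (volume K).toReal) :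
    ∃ x ∈ K, piProj K x = t := by
  have hne := Kne hpos
  have ha : sInf K ∈ K := hK.sInf_mem hne
  have hb : sSup K ∈ K := hK.sSup_mem hne
  have hab : sInf K ≤ sSup K := (csInf_le hK.bddBelow hb).trans (le_csSup hK.bddAbove hb)
  have hKsub : K ⊆ Icc (sInf K) (sSup K) := fun z hz =>
    ⟨csInf_le hK.bddBelow hz, le_csSup hK.bddAbove hz⟩
  have hpib : piProj K (sSup K) = (volume K).toReal := by
    rw [piProj, inter_eq_right.mpr hKsub]
  have hivt := intermediate_value_Icc hab (pi_cont K).continuousOn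
  have htmem : t ∈ Icc (piProj K (sInf K)) (piProj K (sSup K)) := by
    rw [pi_sInf, hpib]; exact ht
  obtain ⟨c, hc, hpc⟩ := hivt htmem
  set x := sSup (K ∩ Iic c) with hx
  have hKc : (K ∩ Iic c).Nonempty := ⟨sInf K, ha, hc.1⟩
  have hcmp : IsCompact (K ∩ Iic c) := hK.inter_right isClosed_Iic
  have hxm : x ∈ K ∩ Iic c := hcmp.sSup_mem hKc
  refine ⟨x, hxm.1, ?_⟩
  rw [← hpc]
  have hset : Icc (sInf K) x ∩ K = Icc (sInf K) c ∩ K := by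
    ext z
    constructor
    · rintro ⟨⟨h1, h2⟩, hzK⟩
      exact ⟨⟨h1, h2.trans hxm.2⟩, hzK⟩
    · rintro ⟨⟨h1, h2⟩, hzK⟩
      exact ⟨⟨h1, le_csSup (hcmp.bddAbove) ⟨hzK, h2⟩⟩, hzK⟩
  rw [piProj, piProj, hset]

lemma sigma_spec {K : Set ℝ} (hK : IsCompact K) (hpos : 0 < volume K) {t : ℝ}
    (ht : t ∈ Icc (0 : ℝ) (volume K).toReal) :
    sigmaSel K t ∈ K ∧ piProj K (sigmaSel K t) = t := by
  have hcl : IsCompact {x ∈ K | piProj K x = t} := by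
    have heq : {x ∈ K | piProj K x = t} = K ∩ (piProj K) ⁻¹' {t} := by
      ext z; simp [Set.mem_setOf_eq, Set.mem_preimage]
    rw [heq]
    exact hK.inter_right (isClosed_singleton.preimage (pi_cont K))
  obtain ⟨x, hx, hpx⟩ := pi_surj hK hpos ht
  have hne : {x ∈ K | piProj K x = t}.Nonempty := ⟨x, hx, hpx⟩
  have hm := hcl.sInf_mem hne
  exact ⟨hm.1, hm.2⟩

/-- The main continuity result for `Ψ_K`. -/
lemma cont_comp {K : Set ℝ} (hK : IsCompact K) (hpos : 0 < volume K) {F : ℝ → ℝ}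
    (hF : MemXK K F) :
    ContinuousOn (F ∘ sigmaSel K) (Icc (0 : ℝ) (volume K).toReal) := by
  haveI : CompactSpace K := isCompact_iff_compactSpace.mp hK
  set v := (volume K).toReal
  let p : K → Icc (0 : ℝ) v := fun x => ⟨piProj K x.1, pi_mem_Icc hK x.1⟩
  have hpc : Continuous p := ((pi_cont K).comp continuous_subtype_val).subtype_mk _
  have hps : Function.Surjective p := by
    rintro ⟨t, ht⟩
    obtain ⟨x, hx, hpx⟩ := pi_surj hK hpos ht
    exact ⟨⟨x, hx⟩, Subtype.ext hpx⟩
  have hq := (hpc.isClosedMap).isQuotientMap hpc hps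
  let g : Icc (0 : ℝ) v → ℝ := fun t => F (sigmaSel K t.1)
  have hg : Continuous g := by
    rw [hq.continuous_iff]
    have heq : g ∘ p = fun x : K => F x.1 := by
      funext x
      have h1 := sigma_spec hK hpos (pi_mem_Icc hK x.1)
      exact hF.2.2 _ h1.1 _ x.2 h1.2
    rw [heq]
    exact continuousOn_iff_continuous_restrict.mp hF.1
  exact continuousOn_iff_continuous_restrict.mpr hg

lemma bsup_eq {s : Set ℝ} (hs : s.Nonempty) {f : ℝ → ℝ} (hb : BddAbove (f '' s))
    (hnn : ∀ x ∈ s, 0 ≤ f x) : (⨆ x ∈ s, f x) = sSup (f '' s) := by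
  haveI : Nonempty s := hs.to_subtype
  have hb' : BddAbove (Set.range fun i : s => f i) := (Set.image_eq_range f s) ▸ hb
  refine (csSup_image hb' ?_).symm
  rw [Real.sSup_empty]
  obtain ⟨x, hx⟩ := hs
  exact le_trans (hnn x hx) (le_ciSup hb' ⟨x, hx⟩)

end Stmt10Aux

open Stmt10Aux in
theorem stmt10 (K : Set ℝ) (hK : IsCompact K) (hpos : 0 < volume K) :
    -- Φ_K maps C_0 into X_K, Ψ_K ∘ Φ_K = id, and Φ_K is isometric
    (∀ G : ℝ → ℝ, MemC0 (volume K).toReal G →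
      MemXK K (G ∘ piProj K) ∧
      (∀ t ∈ Set.Icc (0 : ℝ) (volume K).toReal,
        (G ∘ piProj K) (sigmaSel K t) = G t) ∧
      (⨆ x ∈ K, |(G ∘ piProj K) x|) =
        ⨆ t ∈ Set.Icc (0 : ℝ) (volume K).toReal, |G t|) ∧
    -- Ψ_K maps X_K into C_0, Φ_K ∘ Ψ_K = id, and Ψ_K is isometric
    (∀ F : ℝ → ℝ, MemXK K F →
      MemC0 (volume K).toReal (F ∘ sigmaSel K) ∧
      (∀ x ∈ K, (F ∘ sigmaSel K) (piProj K x) = F x) ∧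
      (⨆ t ∈ Set.Icc (0 : ℝ) (volume K).toReal, |(F ∘ sigmaSel K) t|) =
        ⨆ x ∈ K, |F x|) ∧
    -- additivity and homogeneity of Φ_K are immediate: `(G₁+G₂)∘π = G₁∘π + G₂∘π`;
    -- X_K is exactly the set of functions of the form `G ∘ π_K` on `K`
    (∀ F : ℝ → ℝ, MemXK K F ↔
      ∃ G : ℝ → ℝ, MemC0 (volume K).toReal G ∧ ∀ x ∈ K, F x = G (piProj K x)) := by
  set v := (volume K).toReal with hv
  have hne : K.Nonempty := Kne hpos
  have hvnn : (0 : ℝ) ≤ v := ENNReal.toReal_nonneg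
  have hIcc_ne : (Icc (0 : ℝ) v).Nonempty := ⟨0, le_refl 0, hvnn⟩
  have hσmem : ∀ t ∈ Icc (0 : ℝ) v, sigmaSel K t ∈ K ∧ piProj K (sigmaSel K t) = t :=
    fun t ht => sigma_spec hK hpos ht
  have hcompφψ : ∀ (F : ℝ → ℝ), MemXK K F → ∀ x ∈ K, F (sigmaSel K (piProj K x)) = F x := by
    intro F hF x hx
    obtain ⟨h1, h2⟩ := hσmem _ (pi_mem_Icc hK x)
    exact hF.2.2 _ h1 _ hx h2
  have himg : piProj K '' K = Icc (0 : ℝ) v := by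
    apply Subset.antisymm
    · rintro t ⟨x, _, rfl⟩; exact pi_mem_Icc hK x
    · intro t ht
      obtain ⟨x, hx, hpx⟩ := pi_surj hK hpos ht
      exact ⟨x, hx, hpx⟩
  refine ⟨?_, ?_, ?_⟩
  · -- Part 1
    intro G hG
    have hmx : MemXK K (G ∘ piProj K) := by
      refine ⟨?_, ?_, ?_⟩
      · exact hG.1.comp (pi_cont K).continuousOn fun x _ => pi_mem_Icc hK x
      · simp [Function.comp, pi_sInf, hG.2]
      · intro x _ y _ h; simp [Function.comp, h]
    refine ⟨hmx, ?_, ?_⟩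
    · intro t ht
      simp only [Function.comp]
      rw [(hσmem t ht).2]
    · -- sup equality
      have hbR : BddAbove ((fun t => |G t|) '' Icc (0 : ℝ) v) :=
        isCompact_Icc.bddAbove_image hG.1.abs
      have himg2 : (fun x => |(G ∘ piProj K) x|) '' K = (fun t => |G t|) '' Icc (0 : ℝ) v := by
        rw [← himg, ← Set.image_comp]
        rfl
      have hbL : BddAbove ((fun x => |(G ∘ piProj K) x|) '' K) := himg2 ▸ hbR
      rw [bsup_eq hne hbL (fun x _ => abs_nonneg _),
        bsup_eq hIcc_ne hbR (fun t _ => abs_nonneg _), himg2]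
  · -- Part 2
    intro F hF
    have hψ0 : (F ∘ sigmaSel K) 0 = 0 := by
      obtain ⟨h1, h2⟩ := hσmem 0 ⟨le_refl 0, hvnn⟩
      have := hF.2.2 _ h1 _ (sInf_mem hK hpos) (by rw [h2, pi_sInf])
      simp only [Function.comp]
      rw [this, hF.2.1]
    refine ⟨⟨cont_comp hK hpos hF, hψ0⟩, fun x hx => hcompφψ F hF x hx, ?_⟩
    · have himg2 : (fun t => |(F ∘ sigmaSel K) t|) '' Icc (0 : ℝ) v
          = (fun x => |F x|) '' K := by
        apply Subset.antisymm
        · rintro _ ⟨t, ht, rfl⟩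
          exact ⟨sigmaSel K t, (hσmem t ht).1, rfl⟩
        · rintro _ ⟨x, hx, rfl⟩
          refine ⟨piProj K x, pi_mem_Icc hK x, ?_⟩
          simp only [Function.comp]
          rw [hcompφψ F hF x hx]
      have hbR : BddAbove ((fun x => |F x|) '' K) := hK.bddAbove_image hF.1.abs
      have hbL : BddAbove ((fun t => |(F ∘ sigmaSel K) t|) '' Icc (0 : ℝ) v) := himg2 ▸ hbR
      rw [bsup_eq hIcc_ne hbL (fun t _ => abs_nonneg _),
        bsup_eq hne hbR (fun x _ => abs_nonneg _), himg2]
  · -- Part 3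
    intro F
    constructor
    · intro hF
      refine ⟨F ∘ sigmaSel K, ⟨cont_comp hK hpos hF, ?_⟩, fun x hx => (hcompφψ F hF x hx).symm⟩
      obtain ⟨h1, h2⟩ := hσmem 0 ⟨le_refl 0, hvnn⟩
      have := hF.2.2 _ h1 _ (sInf_mem hK hpos) (by rw [h2, pi_sInf])
      simp only [Function.comp]
      rw [this, hF.2.1]
    · rintro ⟨G, hG, hFG⟩
      refine ⟨?_, ?_, ?_⟩
      · apply ContinuousOn.congr
          (hG.1.comp (pi_cont K).continuousOn fun x _ => pi_mem_Icc hK x)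
        intro x hx
        exact hFG x hx
      · rw [hFG _ (sInf_mem hK hpos), pi_sInf, hG.2]
      · intro x hx y hy h
        rw [hFG x hx, hFG y hy, h]
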